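/- arXiv:0906.4387 — 2 statements merged into one kernel-verified Lean document; each statement's English description precedes it below -/
import Mathlib

section
/- Weak Plünnecke–Ruzsa inequality for entropy: if X_1,…,X_n, X'_1,…,X'_m are independent copies of a G-valued random variable X, then H(X_1+…+X_n − X'_1−…−X'_m) ≤ H(X) + C·(n+m)·log σ[X] for an absolute constant C, where σ[X] := exp(H(X''_1+X''_2) − H(X)) is the doubling constant of X (X''_1, X''_2 independent copies of X). -/
open Real
open scoped BigOperators Pointwise Classical

/-- A finitely supported probability space. -/
structure FinProb (Ω : Type*) [Fintype Ω] where
  p : Ω → ℝ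
  nonneg : ∀ ω, 0 ≤ p ω
  sum_one : ∑ ω, p ω = 1

/-- Probability that the random variable `X` takes the value `s`. -/
noncomputable def prob {Ω S : Type*} [Fintype Ω] (μ : FinProb Ω) (X : Ω → S) (s : S) : ℝ :=
  ∑ ω, if X ω = s then μ.p ω else 0

/-- Shannon entropy of a discrete random variable. -/
noncomputable def entropy {Ω S : Type*} [Fintype Ω] (μ : FinProb Ω) (X : Ω → S) : ℝ :=
  ∑ s ∈ Finset.univ.image X, Real.negMulLog (prob μ X s)

/-- Conditional Shannon entropy `H(X|Y) = H(X,Y) - H(Y)`. -/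
noncomputable def condEntropy {Ω S T : Type*} [Fintype Ω] (μ : FinProb Ω)
    (X : Ω → S) (Y : Ω → T) : ℝ :=
  entropy μ (fun ω => (X ω, Y ω)) - entropy μ Y

/-- The essential range of a random variable: values attained with positive probability. -/
noncomputable def rangeF {Ω S : Type*} [Fintype Ω] (μ : FinProb Ω) (X : Ω → S) : Finset S :=
  (Finset.univ.image X).filter (fun s => prob μ X s ≠ 0)

/-- Two random variables (on possibly different spaces) have the same distribution. -/
def IdentDist {Ω Ω' S : Type*} [Fintype Ω] [Fintype Ω'] (μ : FinProb Ω) (X : Ω → S)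
    (μ' : FinProb Ω') (Y : Ω' → S) : Prop :=
  ∀ s, prob μ X s = prob μ' Y s

/-- Independence of two random variables. -/
def IndepRV {Ω S T : Type*} [Fintype Ω] (μ : FinProb Ω) (X : Ω → S) (Y : Ω → T) : Prop :=
  ∀ s t, prob μ (fun ω => (X ω, Y ω)) (s, t) = prob μ X s * prob μ Y t

/-- Joint independence of a finite family of random variables. -/
def IndepFam {Ω ι : Type*} [Fintype Ω] [Fintype ι] {S : ι → Type*}
    (μ : FinProb Ω) (X : ∀ i, Ω → S i) : Prop :=
  ∀ f : ∀ i, S i, prob μ (fun ω i => X i ω) f = ∏ i, prob μ (X i) (f i)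

/-- `X` and `Y` are conditionally independent given `W`. -/
def CondIndepGiven {Ω S T U : Type*} [Fintype Ω] (μ : FinProb Ω)
    (X : Ω → S) (Y : Ω → T) (W : Ω → U) : Prop :=
  ∀ s t u, prob μ (fun ω => (X ω, Y ω, W ω)) (s, t, u) * prob μ W u
    = prob μ (fun ω => (X ω, W ω)) (s, u) * prob μ (fun ω => (Y ω, W ω)) (t, u)

/-- `Y` is determined by `X` (almost surely). -/
def Determines {Ω S T : Type*} [Fintype Ω] (μ : FinProb Ω) (X : Ω → S) (Y : Ω → T) : Prop :=
  ∃ f : S → T, ∀ ω, μ.p ω ≠ 0 → Y ω = f (X ω)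

/-- The entropy transport distance between the distributions of `X` and `Y`:
the infimum of `H(Z)` over random variables `Z` (coupled with a copy `X'` of `X`)
such that `X' + Z` is distributed as `Y`. -/
noncomputable def transDist {Ω₁ Ω₂ G : Type*} [Fintype Ω₁] [Fintype Ω₂] [AddCommGroup G]
    (μ : FinProb Ω₁) (X : Ω₁ → G) (ν : FinProb Ω₂) (Y : Ω₂ → G) : ℝ :=
  sInf {h : ℝ | ∃ (n : ℕ) (μ' : FinProb (Fin n)) (X' Z : Fin n → G),
    IdentDist μ' X' μ X ∧ IdentDist μ' (fun ω => X' ω + Z ω) ν Y ∧ entropy μ' Z = h}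

/-- Conditioning a finitely supported probability space on an event `E`
(returning `μ` unchanged if `E` has zero probability). -/
noncomputable def condFinProb {Ω : Type*} [Fintype Ω] (μ : FinProb Ω) (E : Ω → Prop) :
    FinProb Ω :=
  if h : 0 < ∑ ω, if E ω then μ.p ω else 0 then
    { p := fun ω => if E ω then μ.p ω / (∑ ω', if E ω' then μ.p ω' else 0) else 0
      nonneg := fun ω => by
        try dsimp only
        split
        · exact div_nonneg (μ.nonneg ω) h.le
        · exact le_refl 0
      sum_one := by
        have h' : ∀ ω, (if E ω then μ.p ω / (∑ ω', if E ω' then μ.p ω' else 0) else 0)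
            = (if E ω then μ.p ω else 0) / (∑ ω', if E ω' then μ.p ω' else 0) := by
          intro ω; split <;> simp
        rw [Finset.sum_congr rfl (fun ω _ => h' ω), ← Finset.sum_div, div_self h.ne'] }
  else μ


section Basic
variable {Ω S T U V : Type*} [Fintype Ω] (μ : FinProb Ω)

lemma prob_nonneg (X : Ω → S) (s : S) : 0 ≤ prob μ X s := by
  refine Finset.sum_nonneg fun ω _ => ?_
  split
  · exact μ.nonneg ω
  · exact le_refl 0

lemma sum_prob_le_one (X : Ω → S) (T : Finset S) : ∑ s ∈ T, prob μ X s ≤ 1 := by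
  unfold prob
  rw [Finset.sum_comm]
  calc ∑ ω, ∑ s ∈ T, (if X ω = s then μ.p ω else 0)
      = ∑ ω, (if X ω ∈ T then μ.p ω else 0) := by
        refine Finset.sum_congr rfl fun ω _ => ?_
        rw [Finset.sum_ite_eq T (X ω) (fun _ => μ.p ω)]
    _ ≤ ∑ ω, μ.p ω := by
        refine Finset.sum_le_sum fun ω _ => ?_
        split
        · exact le_refl _
        · exact μ.nonneg ω
    _ = 1 := μ.sum_one

lemma prob_le_one (X : Ω → S) (s : S) : prob μ X s ≤ 1 := by
  simpa using sum_prob_le_one μ X {s}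

lemma prob_eq_zero_of_not_mem_image (X : Ω → S) {s : S}
    (h : s ∉ Finset.univ.image X) : prob μ X s = 0 := by
  refine Finset.sum_eq_zero fun ω _ => ?_
  have : X ω ≠ s := fun he => h (he ▸ Finset.mem_image_of_mem X (Finset.mem_univ ω))
  simp [this]

lemma mem_rangeF {X : Ω → S} {s : S} : s ∈ rangeF μ X ↔ prob μ X s ≠ 0 := by
  constructor
  · intro h; exact (Finset.mem_filter.1 h).2
  · intro h
    refine Finset.mem_filter.2 ⟨?_, h⟩
    by_contra hs
    exact h (prob_eq_zero_of_not_mem_image μ X hs)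

lemma prob_pos_of_mem_rangeF {X : Ω → S} {s : S} (h : s ∈ rangeF μ X) : 0 < prob μ X s :=
  lt_of_le_of_ne (prob_nonneg μ X s) (Ne.symm ((mem_rangeF μ).1 h))

lemma sum_prob_image (X : Ω → S) : ∑ s ∈ Finset.univ.image X, prob μ X s = 1 := by
  unfold prob
  rw [Finset.sum_comm]
  calc ∑ ω, ∑ s ∈ Finset.univ.image X, (if X ω = s then μ.p ω else 0)
      = ∑ ω, μ.p ω := by
        refine Finset.sum_congr rfl fun ω _ => ?_
        rw [Finset.sum_ite_eq (Finset.univ.image X) (X ω) (fun _ => μ.p ω),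
          if_pos (Finset.mem_image_of_mem X (Finset.mem_univ ω))]
    _ = 1 := μ.sum_one

lemma entropy_eq_sum_rangeF (X : Ω → S) :
    entropy μ X = ∑ s ∈ rangeF μ X, Real.negMulLog (prob μ X s) := by
  unfold entropy rangeF
  rw [Finset.sum_filter_of_ne]
  intro s _ h
  intro h0
  exact h (by rw [h0, Real.negMulLog_zero])

lemma sum_prob_rangeF (X : Ω → S) : ∑ s ∈ rangeF μ X, prob μ X s = 1 := by
  rw [← sum_prob_image μ X]
  unfold rangeF
  rw [Finset.sum_filter_of_ne]
  intro s _ h h0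
  exact h h0

lemma entropy_congr {Ω' : Type*} [Fintype Ω'] {μ' : FinProb Ω'} {X : Ω → S} {Y : Ω' → S}
    (h : IdentDist μ X μ' Y) : entropy μ X = entropy μ' Y := by
  rw [entropy_eq_sum_rangeF, entropy_eq_sum_rangeF]
  have hr : rangeF μ X = rangeF μ' Y := by
    ext s; rw [mem_rangeF, mem_rangeF, h s]
  rw [hr]
  exact Finset.sum_congr rfl fun s _ => by rw [h s]

lemma entropy_nonneg (X : Ω → S) : 0 ≤ entropy μ X := by
  rw [entropy_eq_sum_rangeF]
  exact Finset.sum_nonneg fun s hs =>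
    Real.negMulLog_nonneg (prob_nonneg μ X s) (prob_le_one μ X s)

lemma entropy_const (c : S) : entropy μ (fun _ => c) = 0 := by
  unfold entropy
  refine Finset.sum_eq_zero fun s hs => ?_
  rcases Finset.mem_image.1 hs with ⟨ω, _, rfl⟩
  have : prob μ (fun _ => c) c = 1 := by
    unfold prob; simpa using μ.sum_one
  rw [this, Real.negMulLog_one]

lemma p_le_prob (X : Ω → S) (ω : Ω) : μ.p ω ≤ prob μ X (X ω) := by
  unfold prob
  have := Finset.single_le_sum (f := fun ω' => if X ω' = X ω then μ.p ω' else 0)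
    (fun ω' _ => by split; exacts [μ.nonneg ω', le_refl 0]) (Finset.mem_univ ω)
  simpa using this

end Basic

section Comp
variable {Ω S T U V : Type*} [Fintype Ω] (μ : FinProb Ω)

lemma prob_comp (X : Ω → S) (φ : S → T) (t : T) :
    prob μ (fun ω => φ (X ω)) t = ∑ s ∈ (rangeF μ X).filter (fun s => φ s = t), prob μ X s := by
  unfold prob
  rw [Finset.sum_comm]
  refine Finset.sum_congr rfl fun ω _ => ?_
  have : ∑ s ∈ (rangeF μ X).filter (fun s => φ s = t), (if X ω = s then μ.p ω else 0)
      = if X ω ∈ (rangeF μ X).filter (fun s => φ s = t) then μ.p ω else 0 := by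
    rw [Finset.sum_ite_eq _ (X ω) (fun _ => μ.p ω)]
  rw [this]
  by_cases hp : μ.p ω = 0
  · simp [hp]
  · have hX : X ω ∈ rangeF μ X := (mem_rangeF μ).2 fun h0 =>
      hp (le_antisymm (h0 ▸ p_le_prob μ X ω) (μ.nonneg ω))
    show (if φ (X ω) = t then μ.p ω else 0) = _
    by_cases hφ : φ (X ω) = t
    · rw [if_pos hφ, if_pos (Finset.mem_filter.2 ⟨hX, hφ⟩)]
    · have hmem : X ω ∉ Finset.filter (fun s => φ s = t) (rangeF μ X) :=
        fun h => hφ (Finset.mem_filter.1 h).2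
      rw [if_neg hφ, if_neg hmem]

lemma prob_le_prob_comp (X : Ω → S) (φ : S → T) (s : S) :
    prob μ X s ≤ prob μ (fun ω => φ (X ω)) (φ s) := by
  unfold prob
  refine Finset.sum_le_sum fun ω _ => ?_
  show (if X ω = s then μ.p ω else 0) ≤ (if φ (X ω) = φ s then μ.p ω else 0)
  by_cases h : X ω = s
  · rw [if_pos h, if_pos (by rw [h])]
  · rw [if_neg h]
    split
    · exact μ.nonneg ω
    · exact le_refl 0

lemma identDist_comp {Ω' : Type*} [Fintype Ω'] {μ' : FinProb Ω'} {X : Ω → S} {Y : Ω' → S}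
    (h : IdentDist μ X μ' Y) (φ : S → T) :
    IdentDist μ (fun ω => φ (X ω)) μ' (fun ω => φ (Y ω)) := by
  intro t
  rw [prob_comp, prob_comp]
  have hr : rangeF μ X = rangeF μ' Y := by
    ext s; rw [mem_rangeF, mem_rangeF, h s]
  rw [hr]
  exact Finset.sum_congr rfl fun s _ => h s

lemma rangeF_comp (X : Ω → S) (φ : S → T) :
    rangeF μ (fun ω => φ (X ω)) = (rangeF μ X).image φ := by
  ext t
  rw [mem_rangeF, Finset.mem_image]
  constructor
  · intro h
    rw [prob_comp] at h
    rcases Finset.exists_ne_zero_of_sum_ne_zero h with ⟨s, hs, hs0⟩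
    exact ⟨s, (Finset.mem_filter.1 hs).1, (Finset.mem_filter.1 hs).2⟩
  · rintro ⟨s, hs, rfl⟩
    have h1 : 0 < prob μ X s := prob_pos_of_mem_rangeF μ hs
    have := prob_le_prob_comp μ X φ s
    exact ne_of_gt (lt_of_lt_of_le h1 this)

lemma entropy_comp_eq_sum (X : Ω → S) (φ : S → T) :
    entropy μ (fun ω => φ (X ω))
      = ∑ s ∈ rangeF μ X, prob μ X s * (-Real.log (prob μ (fun ω => φ (X ω)) (φ s))) := by
  rw [entropy_eq_sum_rangeF, rangeF_comp]
  rw [← Finset.sum_fiberwise_of_maps_to (g := φ) (t := (rangeF μ X).image φ)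
    (fun s hs => Finset.mem_image_of_mem φ hs)
    (fun s => prob μ X s * (-Real.log (prob μ (fun ω => φ (X ω)) (φ s))))]
  refine Finset.sum_congr rfl fun t ht => ?_
  have : ∑ s ∈ (rangeF μ X).filter (fun s => φ s = t),
      prob μ X s * (-Real.log (prob μ (fun ω => φ (X ω)) (φ s)))
      = ∑ s ∈ (rangeF μ X).filter (fun s => φ s = t),
      prob μ X s * (-Real.log (prob μ (fun ω => φ (X ω)) t)) := by
    refine Finset.sum_congr rfl fun s hs => ?_
    rw [(Finset.mem_filter.1 hs).2]
  rw [this, ← Finset.sum_mul, ← prob_comp]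
  rw [Real.negMulLog, neg_mul, mul_neg]

lemma entropy_eq_sum (X : Ω → S) :
    entropy μ X = ∑ s ∈ rangeF μ X, prob μ X s * (-Real.log (prob μ X s)) := by
  rw [entropy_eq_sum_rangeF]
  refine Finset.sum_congr rfl fun s _ => ?_
  rw [Real.negMulLog, neg_mul, mul_neg]

lemma entropy_comp_le (X : Ω → S) (φ : S → T) :
    entropy μ (fun ω => φ (X ω)) ≤ entropy μ X := by
  rw [entropy_comp_eq_sum, entropy_eq_sum]
  refine Finset.sum_le_sum fun s hs => ?_
  have h1 : 0 < prob μ X s := prob_pos_of_mem_rangeF μ hs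
  refine mul_le_mul_of_nonneg_left ?_ (le_of_lt h1)
  rw [neg_le_neg_iff]
  exact Real.log_le_log h1 (prob_le_prob_comp μ X φ s)

lemma entropy_comp_inj (X : Ω → S) (φ : S → T) (hφ : Function.Injective φ) :
    entropy μ (fun ω => φ (X ω)) = entropy μ X := by
  have hp : ∀ s, prob μ (fun ω => φ (X ω)) (φ s) = prob μ X s := by
    intro s
    unfold prob
    refine Finset.sum_congr rfl fun ω _ => ?_
    congr 1
    simp only [eq_iff_iff]
    exact ⟨fun h => hφ h, fun h => by rw [h]⟩
  unfold entropy
  have himg : Finset.univ.image (fun ω => φ (X ω)) = (Finset.univ.image X).image φ := by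
    ext t; simp [Finset.mem_image]
  rw [himg, Finset.sum_image (fun a _ b _ h => hφ h)]
  exact Finset.sum_congr rfl fun s _ => by rw [hp s]

lemma prob_eq_sum_pair (X : Ω → S) (Y : Ω → T) {Tf : Finset T} (hT : rangeF μ Y ⊆ Tf) (s : S) :
    prob μ X s = ∑ t ∈ Tf, prob μ (fun ω => (X ω, Y ω)) (s, t) := by
  unfold prob
  rw [Finset.sum_comm]
  refine Finset.sum_congr rfl fun ω _ => ?_
  simp only [Prod.mk.injEq]
  by_cases hp : μ.p ω = 0
  · rw [hp]
    rw [eq_comm]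
    refine (Finset.sum_eq_zero fun t _ => ?_).trans ?_
    · split <;> rfl
    · split <;> rfl
  · have hY : Y ω ∈ Tf := hT ((mem_rangeF μ).2 fun h0 =>
      hp (le_antisymm (h0 ▸ p_le_prob μ Y ω) (μ.nonneg ω)))
    by_cases hs : X ω = s
    · simp only [hs, true_and, if_pos]
      rw [Finset.sum_ite_eq Tf (Y ω) (fun _ => μ.p ω), if_pos hY]
    · simp [hs]

end Comp

section Key
variable {Ω S T U V : Type*} [Fintype Ω] (μ : FinProb Ω)

lemma entropy_comp_eq_sum' (X : Ω → S) (φ : S → T) (Y : Ω → T) (hY : ∀ ω, Y ω = φ (X ω)) :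
    entropy μ Y = ∑ s ∈ rangeF μ X, prob μ X s * (-Real.log (prob μ Y (φ s))) := by
  obtain rfl : Y = fun ω => φ (X ω) := funext hY
  exact entropy_comp_eq_sum μ X φ

lemma prob_le_prob_comp' (X : Ω → S) (φ : S → T) (Y : Ω → T) (hY : ∀ ω, Y ω = φ (X ω))
    (s : S) : prob μ X s ≤ prob μ Y (φ s) := by
  obtain rfl : Y = fun ω => φ (X ω) := funext hY
  exact prob_le_prob_comp μ X φ s

lemma rangeF_comp' (X : Ω → S) (φ : S → T) (Y : Ω → T) (hY : ∀ ω, Y ω = φ (X ω)) :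
    rangeF μ Y = (rangeF μ X).image φ := by
  obtain rfl : Y = fun ω => φ (X ω) := funext hY
  exact rangeF_comp μ X φ

lemma entropy_comp_le' (X : Ω → S) (φ : S → T) (Y : Ω → T) (hY : ∀ ω, Y ω = φ (X ω)) :
    entropy μ Y ≤ entropy μ X := by
  obtain rfl : Y = fun ω => φ (X ω) := funext hY
  exact entropy_comp_le μ X φ

lemma entropy_comp_inj' (X : Ω → S) (φ : S → T) (Y : Ω → T) (hY : ∀ ω, Y ω = φ (X ω))
    (hφ : Function.Injective φ) : entropy μ Y = entropy μ X := by
  obtain rfl : Y = fun ω => φ (X ω) := funext hY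
  exact entropy_comp_inj μ X φ hφ

lemma identDist_comp' {Ω' : Type*} [Fintype Ω'] {μ' : FinProb Ω'} {X : Ω → S} {X' : Ω' → S}
    (h : IdentDist μ X μ' X') (φ : S → T) (Y : Ω → T) (Y' : Ω' → T)
    (hY : ∀ ω, Y ω = φ (X ω)) (hY' : ∀ ω, Y' ω = φ (X' ω)) : IdentDist μ Y μ' Y' := by
  obtain rfl : Y = fun ω => φ (X ω) := funext hY
  obtain rfl : Y' = fun ω => φ (X' ω) := funext hY'
  exact identDist_comp μ h φ

lemma l3 (A : Ω → S) (B : Ω → T) (g : S → U) :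
    entropy μ (fun ω => (A ω, B ω)) + entropy μ (fun ω => g (A ω))
      ≤ entropy μ A + entropy μ (fun ω => (g (A ω), B ω)) := by
  set J : Ω → S × T := fun ω => (A ω, B ω) with hJdef
  set R : Finset (S × T) := rangeF μ J with hRdef
  have eJ : entropy μ J = ∑ x ∈ R, prob μ J x * (-Real.log (prob μ J x)) := entropy_eq_sum μ J
  have eA : entropy μ A = ∑ x ∈ R, prob μ J x * (-Real.log (prob μ A x.1)) :=
    entropy_comp_eq_sum' μ J (fun x => x.1) A (fun ω => rfl)
  have eW : entropy μ (fun ω => g (A ω))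
      = ∑ x ∈ R, prob μ J x * (-Real.log (prob μ (fun ω => g (A ω)) (g x.1))) :=
    entropy_comp_eq_sum' μ J (fun x => g x.1) _ (fun ω => rfl)
  have eQ : entropy μ (fun ω => (g (A ω), B ω))
      = ∑ x ∈ R, prob μ J x * (-Real.log (prob μ (fun ω => (g (A ω), B ω)) (g x.1, x.2))) :=
    entropy_comp_eq_sum' μ J (fun x => (g x.1, x.2)) _ (fun ω => rfl)
  rw [eJ, eA, eW, eQ]
  rw [← Finset.sum_add_distrib, ← Finset.sum_add_distrib, ← sub_nonpos, ← Finset.sum_sub_distrib]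
  have hterm : ∀ x ∈ R,
      (prob μ J x * (-Real.log (prob μ J x))
        + prob μ J x * (-Real.log (prob μ (fun ω => g (A ω)) (g x.1))))
      - (prob μ J x * (-Real.log (prob μ A x.1))
        + prob μ J x * (-Real.log (prob μ (fun ω => (g (A ω), B ω)) (g x.1, x.2))))
      ≤ prob μ A x.1 * prob μ (fun ω => (g (A ω), B ω)) (g x.1, x.2)
          / prob μ (fun ω => g (A ω)) (g x.1)
        - prob μ J x := by
    intro x hx
    have hJx : 0 < prob μ J x := prob_pos_of_mem_rangeF μ hx
    have hAx : 0 < prob μ A x.1 :=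
      lt_of_lt_of_le hJx (prob_le_prob_comp' μ J (fun y => y.1) A (fun ω => rfl) x)
    have hWx : 0 < prob μ (fun ω => g (A ω)) (g x.1) :=
      lt_of_lt_of_le hJx (prob_le_prob_comp' μ J (fun y => g y.1) _ (fun ω => rfl) x)
    have hQx : 0 < prob μ (fun ω => (g (A ω), B ω)) (g x.1, x.2) :=
      lt_of_lt_of_le hJx (prob_le_prob_comp' μ J (fun y => (g y.1, y.2)) _ (fun ω => rfl) x)
    set a := prob μ J x
    set b := prob μ (fun ω => g (A ω)) (g x.1)
    set c := prob μ A x.1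
    set d := prob μ (fun ω => (g (A ω), B ω)) (g x.1, x.2)
    have hrw : a * (-Real.log a) + a * (-Real.log b) - (a * (-Real.log c) + a * (-Real.log d))
        = a * Real.log (c * d / (a * b)) := by
      rw [Real.log_div (by positivity) (by positivity), Real.log_mul (ne_of_gt hAx)
        (ne_of_gt hQx), Real.log_mul (ne_of_gt hJx) (ne_of_gt hWx)]
      ring
    rw [hrw]
    have hlog : Real.log (c * d / (a * b)) ≤ c * d / (a * b) - 1 :=
      Real.log_le_sub_one_of_pos (by positivity)
    calc a * Real.log (c * d / (a * b)) ≤ a * (c * d / (a * b) - 1) :=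
          mul_le_mul_of_nonneg_left hlog (le_of_lt hJx)
      _ = c * d / b - a := by field_simp
  refine le_trans (Finset.sum_le_sum hterm) ?_
  rw [Finset.sum_sub_distrib]
  have hsum1 : ∑ x ∈ R, prob μ J x = 1 := sum_prob_rangeF μ J
  rw [hsum1, sub_nonpos]
  -- remains: ∑ x ∈ R, pA x.1 * pQ (g x.1, x.2) / pW (g x.1) ≤ 1
  have hsubset : R ⊆ (R.image (fun x => x.1)) ×ˢ (R.image (fun x => x.2)) := by
    intro x hx
    exact Finset.mem_product.2 ⟨Finset.mem_image_of_mem _ hx, Finset.mem_image_of_mem _ hx⟩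
  have hBrange : rangeF μ B ⊆ R.image (fun x => x.2) :=
    le_of_eq (rangeF_comp' μ J (fun x => x.2) B (fun ω => rfl))
  calc ∑ x ∈ R, prob μ A x.1 * prob μ (fun ω => (g (A ω), B ω)) (g x.1, x.2)
          / prob μ (fun ω => g (A ω)) (g x.1)
      ≤ ∑ x ∈ (R.image (fun x => x.1)) ×ˢ (R.image (fun x => x.2)),
          prob μ A x.1 * prob μ (fun ω => (g (A ω), B ω)) (g x.1, x.2)
          / prob μ (fun ω => g (A ω)) (g x.1) := by
        refine Finset.sum_le_sum_of_subset_of_nonneg hsubset fun x _ _ => ?_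
        have h1 := prob_nonneg μ A x.1
        have h2 := prob_nonneg μ (fun ω => (g (A ω), B ω)) (g x.1, x.2)
        have h3 := prob_nonneg μ (fun ω => g (A ω)) (g x.1)
        positivity
    _ = ∑ a ∈ R.image (fun x => x.1), ∑ b ∈ R.image (fun x => x.2),
          prob μ A a * prob μ (fun ω => (g (A ω), B ω)) (g a, b)
          / prob μ (fun ω => g (A ω)) (g a) := by rw [Finset.sum_product]
    _ = ∑ a ∈ R.image (fun x => x.1), prob μ A a := by
        refine Finset.sum_congr rfl fun a ha => ?_
        rcases Finset.mem_image.1 ha with ⟨x, hx, rfl⟩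
        have hAa : 0 < prob μ A x.1 :=
          lt_of_lt_of_le (prob_pos_of_mem_rangeF μ hx)
            (prob_le_prob_comp' μ J (fun y => y.1) A (fun ω => rfl) x)
        have hWa : 0 < prob μ (fun ω => g (A ω)) (g x.1) :=
          lt_of_lt_of_le (prob_pos_of_mem_rangeF μ hx)
            (prob_le_prob_comp' μ J (fun y => g y.1) _ (fun ω => rfl) x)
        have hmarg : prob μ (fun ω => g (A ω)) (g x.1)
            = ∑ b ∈ R.image (fun x => x.2),
              prob μ (fun ω => (g (A ω), B ω)) (g x.1, b) :=
          prob_eq_sum_pair μ (fun ω => g (A ω)) B hBrange (g x.1)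
        rw [← Finset.sum_div, ← Finset.mul_sum, ← hmarg, mul_div_assoc,
          div_self (ne_of_gt hWa), mul_one]
    _ ≤ 1 := sum_prob_le_one μ A _
  
lemma key_ineq (A : Ω → S) (B : Ω → T) (W : Ω → U) (g : S → U) (h : T → U)
    (hg : ∀ ω, W ω = g (A ω)) (hh : ∀ ω, W ω = h (B ω)) :
    entropy μ (fun ω => (A ω, B ω)) + entropy μ W ≤ entropy μ A + entropy μ B := by
  have l := l3 μ A B g
  have hW : (fun ω => g (A ω)) = W := funext fun ω => (hg ω).symm
  rw [hW] at l
  have hQB : entropy μ (fun ω => (g (A ω), B ω)) = entropy μ B := by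
    refine entropy_comp_inj' μ B (fun b => (h b, b)) _ (fun ω => ?_) ?_
    · rw [← hg ω, hh ω]
    · intro b b' hbb
      exact congrArg Prod.snd hbb
  rw [hQB] at l
  exact l

lemma entropy_pair_le (A : Ω → S) (B : Ω → T) :
    entropy μ (fun ω => (A ω, B ω)) ≤ entropy μ A + entropy μ B := by
  have h := key_ineq μ A B (fun _ => (0:ℕ)) (fun _ => 0) (fun _ => 0)
    (fun _ => rfl) (fun _ => rfl)
  rw [entropy_const] at h
  linarith

end Key

section Prod
variable {Ω₁ Ω₂ Ω₃ S T U : Type*} [Fintype Ω₁] [Fintype Ω₂] [Fintype Ω₃]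

/-- Product probability space. -/
noncomputable def prodP (μ : FinProb Ω₁) (ν : FinProb Ω₂) : FinProb (Ω₁ × Ω₂) where
  p := fun ω => μ.p ω.1 * ν.p ω.2
  nonneg := fun ω => mul_nonneg (μ.nonneg _) (ν.nonneg _)
  sum_one := by
    rw [Fintype.sum_prod_type]
    simp only [← Finset.mul_sum]
    rw [ν.sum_one]
    simp only [mul_one]
    exact μ.sum_one

@[simp] lemma prodP_p (μ : FinProb Ω₁) (ν : FinProb Ω₂) (ω : Ω₁ × Ω₂) :
    (prodP μ ν).p ω = μ.p ω.1 * ν.p ω.2 := rfl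

def assoc23 {Ω₁ Ω₂ Ω₃ : Type*} : ((Ω₂ × Ω₃) × Ω₁) ≃ ((Ω₁ × Ω₂) × Ω₃) :=
  ⟨fun x => ((x.2, x.1.1), x.1.2), fun y => ((y.1.2, y.2), y.1.1), fun _ => rfl, fun _ => rfl⟩

def assoc13 {Ω₁ Ω₂ Ω₃ : Type*} : ((Ω₁ × Ω₃) × Ω₂) ≃ ((Ω₁ × Ω₂) × Ω₃) :=
  ⟨fun x => ((x.1.1, x.2), x.1.2), fun y => ((y.1.1, y.2), y.1.2), fun _ => rfl, fun _ => rfl⟩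

lemma prob_reindex {Ω Ω' : Type*} [Fintype Ω] [Fintype Ω'] (μ : FinProb Ω) (μ' : FinProb Ω')
    (e : Ω' ≃ Ω) (hp : ∀ ω', μ'.p ω' = μ.p (e ω')) (X : Ω → S) (Y : Ω' → S)
    (hY : ∀ ω', Y ω' = X (e ω')) (s : S) : prob μ' Y s = prob μ X s := by
  unfold prob
  rw [← Equiv.sum_comp e (fun ω => if X ω = s then μ.p ω else 0)]
  refine Finset.sum_congr rfl fun ω' _ => ?_
  show _ = (if X (e ω') = s then μ.p (e ω') else 0)
  rw [hY ω', hp ω']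

lemma entropy_reindex {Ω Ω' : Type*} [Fintype Ω] [Fintype Ω'] (μ : FinProb Ω) (μ' : FinProb Ω')
    (e : Ω' ≃ Ω) (hp : ∀ ω', μ'.p ω' = μ.p (e ω')) (X : Ω → S) (Y : Ω' → S)
    (hY : ∀ ω', Y ω' = X (e ω')) : entropy μ' Y = entropy μ X :=
  entropy_congr μ' (fun s => prob_reindex μ μ' e hp X Y hY s)

lemma prob_fst (μ : FinProb Ω₁) (ν : FinProb Ω₂) (X : Ω₁ → S) (Y : Ω₁ × Ω₂ → S)
    (hY : ∀ ω, Y ω = X ω.1) (s : S) : prob (prodP μ ν) Y s = prob μ X s := by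
  obtain rfl : Y = fun ω => X ω.1 := funext hY
  unfold prob
  rw [Fintype.sum_prod_type]
  have hterm : ∀ a : Ω₁, ∀ b : Ω₂,
      (if (fun ω : Ω₁ × Ω₂ => X ω.1) (a, b) = s then (prodP μ ν).p (a, b) else 0)
        = (if X a = s then μ.p a else 0) * ν.p b := by
    intro a b
    by_cases h : X a = s
    · simp [h]
    · simp [h]
  simp only [hterm]
  simp only [← Finset.mul_sum]
  rw [ν.sum_one]
  simp only [mul_one]

lemma prob_snd (μ : FinProb Ω₁) (ν : FinProb Ω₂) (Y : Ω₂ → S) (Z : Ω₁ × Ω₂ → S)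
    (hZ : ∀ ω, Z ω = Y ω.2) (s : S) : prob (prodP μ ν) Z s = prob ν Y s := by
  obtain rfl : Z = fun ω => Y ω.2 := funext hZ
  unfold prob
  rw [Fintype.sum_prod_type]
  have hterm : ∀ a : Ω₁, ∀ b : Ω₂,
      (if (fun ω : Ω₁ × Ω₂ => Y ω.2) (a, b) = s then (prodP μ ν).p (a, b) else 0)
        = μ.p a * (if Y b = s then ν.p b else 0) := by
    intro a b
    by_cases h : Y b = s
    · simp [h]
    · simp [h]
  simp only [hterm]
  simp only [← Finset.mul_sum]
  rw [← Finset.sum_mul, μ.sum_one, one_mul]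

lemma entropy_fst (μ : FinProb Ω₁) (ν : FinProb Ω₂) (X : Ω₁ → S) (Y : Ω₁ × Ω₂ → S)
    (hY : ∀ ω, Y ω = X ω.1) : entropy (prodP μ ν) Y = entropy μ X :=
  entropy_congr (prodP μ ν) (fun s => prob_fst μ ν X Y hY s)

lemma entropy_snd (μ : FinProb Ω₁) (ν : FinProb Ω₂) (Y : Ω₂ → S) (Z : Ω₁ × Ω₂ → S)
    (hZ : ∀ ω, Z ω = Y ω.2) : entropy (prodP μ ν) Z = entropy ν Y :=
  entropy_congr (prodP μ ν) (fun s => prob_snd μ ν Y Z hZ s)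

lemma prob_pair_prod (μ : FinProb Ω₁) (ν : FinProb Ω₂) (X : Ω₁ → S) (Y : Ω₂ → T)
    (Z : Ω₁ × Ω₂ → S × T) (hZ : ∀ ω, Z ω = (X ω.1, Y ω.2)) (s : S) (t : T) :
    prob (prodP μ ν) Z (s, t) = prob μ X s * prob ν Y t := by
  obtain rfl : Z = fun ω => (X ω.1, Y ω.2) := funext hZ
  unfold prob
  rw [Fintype.sum_prod_type, Finset.sum_mul_sum]
  refine Finset.sum_congr rfl fun a _ => Finset.sum_congr rfl fun b _ => ?_
  by_cases h1 : X a = s <;> by_cases h2 : Y b = t <;>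
    simp [Prod.ext_iff, h1, h2]

end Prod

section Indep
variable {Ω Ω₁ Ω₂ Ω₃ S T U : Type*} [Fintype Ω] [Fintype Ω₁] [Fintype Ω₂] [Fintype Ω₃]

lemma entropy_pair_of_indep (μ : FinProb Ω) (U' : Ω → S) (V' : Ω → T)
    (h : ∀ s t, prob μ (fun ω => (U' ω, V' ω)) (s, t) = prob μ U' s * prob μ V' t) :
    entropy μ (fun ω => (U' ω, V' ω)) = entropy μ U' + entropy μ V' := by
  have hr : rangeF μ (fun ω => (U' ω, V' ω)) = rangeF μ U' ×ˢ rangeF μ V' := by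
    ext ⟨s, t⟩
    rw [mem_rangeF, Finset.mem_product, mem_rangeF, mem_rangeF, h s t, mul_ne_zero_iff]
  have e1 : ∀ s : S, ∑ t ∈ rangeF μ V', prob μ V' t * Real.negMulLog (prob μ U' s)
      = Real.negMulLog (prob μ U' s) := by
    intro s
    rw [← Finset.sum_mul, sum_prob_rangeF, one_mul]
  have e2 : ∀ s : S, ∑ t ∈ rangeF μ V', prob μ U' s * Real.negMulLog (prob μ V' t)
      = prob μ U' s * entropy μ V' := by
    intro s
    rw [← Finset.mul_sum, ← entropy_eq_sum_rangeF]
  calc entropy μ (fun ω => (U' ω, V' ω))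
      = ∑ s ∈ rangeF μ U', ∑ t ∈ rangeF μ V',
          (prob μ V' t * Real.negMulLog (prob μ U' s)
            + prob μ U' s * Real.negMulLog (prob μ V' t)) := by
        rw [entropy_eq_sum_rangeF, hr, Finset.sum_product]
        refine Finset.sum_congr rfl fun s _ => Finset.sum_congr rfl fun t _ => ?_
        rw [h s t, Real.negMulLog_mul]
    _ = ∑ s ∈ rangeF μ U', (Real.negMulLog (prob μ U' s) + prob μ U' s * entropy μ V') := by
        refine Finset.sum_congr rfl fun s _ => ?_
        rw [Finset.sum_add_distrib, e1 s, e2 s]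
    _ = entropy μ U' + entropy μ V' := by
        rw [Finset.sum_add_distrib, ← Finset.sum_mul, sum_prob_rangeF, one_mul,
          ← entropy_eq_sum_rangeF]

lemma entropy_pair_prod (μ : FinProb Ω₁) (ν : FinProb Ω₂) (X : Ω₁ → S) (Y : Ω₂ → T)
    (Z : Ω₁ × Ω₂ → S × T) (hZ : ∀ ω, Z ω = (X ω.1, Y ω.2)) :
    entropy (prodP μ ν) Z = entropy μ X + entropy ν Y := by
  obtain rfl : Z = fun ω => (X ω.1, Y ω.2) := funext hZ
  have h : ∀ s t, prob (prodP μ ν) (fun ω => (X ω.1, Y ω.2)) (s, t)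
      = prob (prodP μ ν) (fun ω => X ω.1) s * prob (prodP μ ν) (fun ω => Y ω.2) t := by
    intro s t
    rw [prob_pair_prod μ ν X Y _ (fun ω => rfl) s t, prob_fst μ ν X _ (fun ω => rfl) s,
      prob_snd μ ν Y _ (fun ω => rfl) t]
  calc entropy (prodP μ ν) (fun ω => (X ω.1, Y ω.2))
      = entropy (prodP μ ν) (fun ω => X ω.1) + entropy (prodP μ ν) (fun ω => Y ω.2) :=
        entropy_pair_of_indep (prodP μ ν) _ _ h
    _ = entropy μ X + entropy ν Y := by
        rw [entropy_fst μ ν X _ (fun ω => rfl), entropy_snd μ ν Y _ (fun ω => rfl)]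

variable {G : Type*} [AddCommGroup G]

lemma entropy_add_ge_right (μ : FinProb Ω₁) (ν : FinProb Ω₂) (x : Ω₁ → G) (y : Ω₂ → G) :
    entropy ν y ≤ entropy (prodP μ ν) (fun ω => x ω.1 + y ω.2) := by
  have hpair : entropy (prodP μ ν) (fun ω => (x ω.1 + y ω.2, x ω.1))
      = entropy μ x + entropy ν y := by
    have h2 : entropy (prodP μ ν) (fun ω => (x ω.1 + y ω.2, x ω.1))
        = entropy (prodP μ ν) (fun ω => (x ω.1, y ω.2)) := by
      refine entropy_comp_inj' (prodP μ ν) (fun ω => (x ω.1, y ω.2))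
        (fun p => (p.1 + p.2, p.1)) _ (fun ω => rfl) ?_
      have : Function.LeftInverse (fun q : G × G => (q.2, q.1 - q.2))
          (fun p : G × G => (p.1 + p.2, p.1)) := by
        intro p
        simp
      exact this.injective
    rw [h2]
    exact entropy_pair_prod μ ν x y _ (fun ω => rfl)
  have hle : entropy (prodP μ ν) (fun ω => (x ω.1 + y ω.2, x ω.1))
      ≤ entropy (prodP μ ν) (fun ω => x ω.1 + y ω.2)
        + entropy (prodP μ ν) (fun ω => x ω.1) :=
    entropy_pair_le (prodP μ ν) _ _
  rw [hpair, entropy_fst μ ν x _ (fun ω => rfl)] at hle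
  linarith

lemma kv3 (μ₁ : FinProb Ω₁) (μ₂ : FinProb Ω₂) (μ₃ : FinProb Ω₃)
    (a : Ω₁ → G) (b : Ω₂ → G) (c : Ω₃ → G) :
    entropy (prodP (prodP μ₁ μ₂) μ₃) (fun ω => a ω.1.1 + b ω.1.2 + c ω.2) + entropy μ₂ b
      ≤ entropy (prodP μ₁ μ₂) (fun ω => a ω.1 + b ω.2)
        + entropy (prodP μ₂ μ₃) (fun ω => b ω.1 + c ω.2) := by
  set μT := prodP (prodP μ₁ μ₂) μ₃ with hμT
  have hkey : entropy μT (fun ω => ((a ω.1.1 + b ω.1.2, c ω.2), (b ω.1.2 + c ω.2, a ω.1.1)))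
      + entropy μT (fun ω => a ω.1.1 + b ω.1.2 + c ω.2)
      ≤ entropy μT (fun ω => (a ω.1.1 + b ω.1.2, c ω.2))
        + entropy μT (fun ω => (b ω.1.2 + c ω.2, a ω.1.1)) :=
    key_ineq μT (fun ω => (a ω.1.1 + b ω.1.2, c ω.2)) (fun ω => (b ω.1.2 + c ω.2, a ω.1.1))
      (fun ω => a ω.1.1 + b ω.1.2 + c ω.2) (fun q => q.1 + q.2) (fun q => q.2 + q.1)
      (fun ω => rfl) (fun ω => by dsimp only; abel)
  have h1 : entropy μT (fun ω => ((a ω.1.1 + b ω.1.2, c ω.2), (b ω.1.2 + c ω.2, a ω.1.1)))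
      = entropy μT (fun ω => ((a ω.1.1, b ω.1.2), c ω.2)) := by
    refine entropy_comp_inj' μT (fun ω => ((a ω.1.1, b ω.1.2), c ω.2))
      (fun p => ((p.1.1 + p.1.2, p.2), (p.1.2 + p.2, p.1.1))) _ (fun ω => rfl) ?_
    have : Function.LeftInverse
        (fun q : (G × G) × (G × G) => ((q.2.2, q.1.1 - q.2.2), q.1.2))
        (fun p : (G × G) × G => ((p.1.1 + p.1.2, p.2), (p.1.2 + p.2, p.1.1))) := by
      intro p
      simp
    exact this.injective
  have h2 : entropy μT (fun ω => ((a ω.1.1, b ω.1.2), c ω.2))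
      = entropy μ₁ a + entropy μ₂ b + entropy μ₃ c := by
    rw [entropy_pair_prod (prodP μ₁ μ₂) μ₃ (fun u => (a u.1, b u.2)) c _ (fun ω => rfl),
      entropy_pair_prod μ₁ μ₂ a b _ (fun ω => rfl)]
  have h3 : entropy μT (fun ω => (a ω.1.1 + b ω.1.2, c ω.2))
      = entropy (prodP μ₁ μ₂) (fun ω => a ω.1 + b ω.2) + entropy μ₃ c :=
    entropy_pair_prod (prodP μ₁ μ₂) μ₃ (fun u => a u.1 + b u.2) c _ (fun ω => rfl)
  have h4 : entropy μT (fun ω => (b ω.1.2 + c ω.2, a ω.1.1))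
      = entropy (prodP μ₂ μ₃) (fun ω => b ω.1 + c ω.2) + entropy μ₁ a := by
    have hre := entropy_reindex μT (prodP (prodP μ₂ μ₃) μ₁) assoc23
      (by intro x
          show μ₂.p x.1.1 * μ₃.p x.1.2 * μ₁.p x.2 = μ₁.p x.2 * μ₂.p x.1.1 * μ₃.p x.1.2
          ring)
      (fun ω => (b ω.1.2 + c ω.2, a ω.1.1)) (fun x => (b x.1.1 + c x.1.2, a x.2))
      (fun x => rfl)
    rw [← hre]
    exact entropy_pair_prod (prodP μ₂ μ₃) μ₁ (fun u => b u.1 + c u.2) a _ (fun ω => rfl)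
  rw [h1, h2] at hkey
  rw [h3, h4] at hkey
  linarith

lemma ruzsa3 (μ₁ : FinProb Ω₁) (μ₂ : FinProb Ω₂) (μ₃ : FinProb Ω₃)
    (a : Ω₁ → G) (b : Ω₂ → G) (c : Ω₃ → G) :
    entropy (prodP μ₁ μ₃) (fun ω => a ω.1 - c ω.2) + entropy μ₂ b
      ≤ entropy (prodP μ₁ μ₂) (fun ω => a ω.1 + b ω.2)
        + entropy (prodP μ₂ μ₃) (fun ω => b ω.1 + c ω.2) := by
  set μT := prodP (prodP μ₁ μ₂) μ₃ with hμT
  have hkey : entropy μT (fun ω => ((a ω.1.1 + b ω.1.2, b ω.1.2 + c ω.2), (a ω.1.1, c ω.2)))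
      + entropy μT (fun ω => a ω.1.1 - c ω.2)
      ≤ entropy μT (fun ω => (a ω.1.1 + b ω.1.2, b ω.1.2 + c ω.2))
        + entropy μT (fun ω => (a ω.1.1, c ω.2)) :=
    key_ineq μT (fun ω => (a ω.1.1 + b ω.1.2, b ω.1.2 + c ω.2)) (fun ω => (a ω.1.1, c ω.2))
      (fun ω => a ω.1.1 - c ω.2) (fun q => q.1 - q.2) (fun q => q.1 - q.2)
      (fun ω => by dsimp only; abel) (fun ω => rfl)
  have h1 : entropy μT (fun ω => ((a ω.1.1 + b ω.1.2, b ω.1.2 + c ω.2), (a ω.1.1, c ω.2)))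
      = entropy μ₁ a + entropy μ₂ b + entropy μ₃ c := by
    have hinj : entropy μT (fun ω => ((a ω.1.1 + b ω.1.2, b ω.1.2 + c ω.2), (a ω.1.1, c ω.2)))
        = entropy μT (fun ω => ((a ω.1.1, b ω.1.2), c ω.2)) := by
      refine entropy_comp_inj' μT (fun ω => ((a ω.1.1, b ω.1.2), c ω.2))
        (fun p => ((p.1.1 + p.1.2, p.1.2 + p.2), (p.1.1, p.2))) _ (fun ω => rfl) ?_
      have : Function.LeftInverse
          (fun q : (G × G) × (G × G) => ((q.2.1, q.1.1 - q.2.1), q.2.2))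
          (fun p : (G × G) × G => ((p.1.1 + p.1.2, p.1.2 + p.2), (p.1.1, p.2))) := by
        intro p
        simp
      exact this.injective
    rw [hinj, entropy_pair_prod (prodP μ₁ μ₂) μ₃ (fun u => (a u.1, b u.2)) c _ (fun ω => rfl),
      entropy_pair_prod μ₁ μ₂ a b _ (fun ω => rfl)]
  have h2 : entropy μT (fun ω => (a ω.1.1 + b ω.1.2, b ω.1.2 + c ω.2))
      ≤ entropy (prodP μ₁ μ₂) (fun ω => a ω.1 + b ω.2)
        + entropy (prodP μ₂ μ₃) (fun ω => b ω.1 + c ω.2) := by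
    have hle : entropy μT (fun ω => (a ω.1.1 + b ω.1.2, b ω.1.2 + c ω.2))
        ≤ entropy μT (fun ω => a ω.1.1 + b ω.1.2) + entropy μT (fun ω => b ω.1.2 + c ω.2) :=
      entropy_pair_le μT _ _
    have hl : entropy μT (fun ω => a ω.1.1 + b ω.1.2)
        = entropy (prodP μ₁ μ₂) (fun ω => a ω.1 + b ω.2) :=
      entropy_fst (prodP μ₁ μ₂) μ₃ (fun u => a u.1 + b u.2) _ (fun ω => rfl)
    have hr : entropy μT (fun ω => b ω.1.2 + c ω.2)
        = entropy (prodP μ₂ μ₃) (fun ω => b ω.1 + c ω.2) := by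
      have hre := entropy_reindex μT (prodP (prodP μ₂ μ₃) μ₁) assoc23
        (by intro x
            show μ₂.p x.1.1 * μ₃.p x.1.2 * μ₁.p x.2 = μ₁.p x.2 * μ₂.p x.1.1 * μ₃.p x.1.2
            ring)
        (fun ω => b ω.1.2 + c ω.2) (fun x => b x.1.1 + c x.1.2) (fun x => rfl)
      rw [← hre]
      exact entropy_fst (prodP μ₂ μ₃) μ₁ (fun u => b u.1 + c u.2) _ (fun ω => rfl)
    rw [hl, hr] at hle
    exact hle
  have hp13 : ∀ x : (Ω₁ × Ω₃) × Ω₂, (prodP (prodP μ₁ μ₃) μ₂).p x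
      = μT.p (assoc13 x) := by
    intro x
    show μ₁.p x.1.1 * μ₃.p x.1.2 * μ₂.p x.2 = μ₁.p x.1.1 * μ₂.p x.2 * μ₃.p x.1.2
    ring
  have h3 : entropy μT (fun ω => (a ω.1.1, c ω.2)) = entropy μ₁ a + entropy μ₃ c := by
    have hre := entropy_reindex μT (prodP (prodP μ₁ μ₃) μ₂) assoc13 hp13
      (fun ω => (a ω.1.1, c ω.2)) (fun x => (a x.1.1, c x.1.2)) (fun x => rfl)
    rw [← hre]
    have hfst : entropy (prodP (prodP μ₁ μ₃) μ₂) (fun x => (a x.1.1, c x.1.2))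
        = entropy (prodP μ₁ μ₃) (fun u => (a u.1, c u.2)) :=
      entropy_fst (prodP μ₁ μ₃) μ₂ (fun u => (a u.1, c u.2)) _ (fun ω => rfl)
    rw [hfst]
    exact entropy_pair_prod μ₁ μ₃ a c _ (fun ω => rfl)
  have h4 : entropy μT (fun ω => a ω.1.1 - c ω.2)
      = entropy (prodP μ₁ μ₃) (fun ω => a ω.1 - c ω.2) := by
    have hre := entropy_reindex μT (prodP (prodP μ₁ μ₃) μ₂) assoc13 hp13
      (fun ω => a ω.1.1 - c ω.2) (fun x => a x.1.1 - c x.1.2) (fun x => rfl)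
    rw [← hre]
    exact entropy_fst (prodP μ₁ μ₃) μ₂ (fun u => a u.1 - c u.2) _ (fun ω => rfl)
  rw [h1, h3, h4] at hkey
  linarith

end Indep

section PiSpace
variable {Ω₀ : Type*} [Fintype Ω₀] {G : Type*} [AddCommGroup G]

/-- Finite product (power) probability space. -/
noncomputable def piP (μ₀ : FinProb Ω₀) (ι : Type*) [DecidableEq ι] [Fintype ι] : FinProb (ι → Ω₀) where
  p := fun ω => ∏ i, μ₀.p (ω i)
  nonneg := fun ω => Finset.prod_nonneg fun i _ => μ₀.nonneg _
  sum_one := by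
    rw [← Fintype.prod_sum (f := fun (_ : ι) (a : Ω₀) => μ₀.p a)]
    simp [μ₀.sum_one]

@[simp] lemma piP_p (μ₀ : FinProb Ω₀) (ι : Type*) [DecidableEq ι] [Fintype ι] (ω : ι → Ω₀) :
    (piP μ₀ ι).p ω = ∏ i, μ₀.p (ω i) := rfl

def consE (k : ℕ) : ((Fin k → Ω₀) × Ω₀) ≃ (Fin (k+1) → Ω₀) where
  toFun := fun x => Fin.cons x.2 x.1
  invFun := fun f => (fun i => f i.succ, f 0)
  left_inv := fun x => by obtain ⟨u, a⟩ := x; simp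
  right_inv := fun f => Fin.cons_self_tail f

def consE' (k : ℕ) : (Ω₀ × (Fin k → Ω₀)) ≃ (Fin (k+1) → Ω₀) where
  toFun := fun x => Fin.cons x.1 x.2
  invFun := fun f => (f 0, fun i => f i.succ)
  left_inv := fun x => by obtain ⟨a, u⟩ := x; simp
  right_inv := fun f => Fin.cons_self_tail f

variable (μ₀ : FinProb Ω₀) (X₀ : Ω₀ → G)

/-- Entropy of the sum of `k` independent copies. -/
noncomputable def Hsum (k : ℕ) : ℝ :=
  entropy (piP μ₀ (Fin k)) (fun ω => ∑ i, X₀ (ω i))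

/-- Entropy of the sum of two independent copies. -/
noncomputable def Hdbl : ℝ := entropy (prodP μ₀ μ₀) (fun ω => X₀ ω.1 + X₀ ω.2)

lemma Hsum_one : Hsum μ₀ X₀ 1 = entropy μ₀ X₀ := by
  unfold Hsum
  exact entropy_reindex μ₀ (piP μ₀ (Fin 1)) (Equiv.funUnique (Fin 1) Ω₀)
    (fun ω' => by simp) X₀ (fun ω => ∑ i, X₀ (ω i)) (fun ω' => by simp)

lemma Hsum_zero : Hsum μ₀ X₀ 0 = 0 := by
  unfold Hsum
  have h : (fun ω : Fin 0 → Ω₀ => ∑ i, X₀ (ω i)) = fun _ => (0 : G) := by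
    funext ω; simp
  rw [h, entropy_const]

lemma entropy_sum_cons (k : ℕ) :
    entropy (prodP (piP μ₀ (Fin k)) μ₀) (fun ω => (∑ i, X₀ (ω.1 i)) + X₀ ω.2)
      = Hsum μ₀ X₀ (k+1) := by
  unfold Hsum
  refine entropy_reindex (piP μ₀ (Fin (k+1))) (prodP (piP μ₀ (Fin k)) μ₀) (consE k)
    (fun x => ?_) (fun f => ∑ i, X₀ (f i)) _ (fun x => ?_)
  · show (∏ i, μ₀.p (x.1 i)) * μ₀.p x.2 = ∏ i, μ₀.p ((Fin.cons x.2 x.1 : Fin (k+1) → Ω₀) i)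
    rw [Fin.prod_univ_succ]
    simp [mul_comm]
  · show (∑ i, X₀ (x.1 i)) + X₀ x.2 = ∑ i, X₀ ((Fin.cons x.2 x.1 : Fin (k+1) → Ω₀) i)
    rw [Fin.sum_univ_succ]
    simp [add_comm]

lemma entropy_sum_cons' (k : ℕ) :
    entropy (prodP μ₀ (piP μ₀ (Fin k))) (fun ω => X₀ ω.1 + ∑ j, X₀ (ω.2 j))
      = Hsum μ₀ X₀ (k+1) := by
  unfold Hsum
  refine entropy_reindex (piP μ₀ (Fin (k+1))) (prodP μ₀ (piP μ₀ (Fin k))) (consE' k)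
    (fun x => ?_) (fun f => ∑ i, X₀ (f i)) _ (fun x => ?_)
  · show μ₀.p x.1 * (∏ i, μ₀.p (x.2 i)) = ∏ i, μ₀.p ((Fin.cons x.1 x.2 : Fin (k+1) → Ω₀) i)
    rw [Fin.prod_univ_succ]
    simp
  · show X₀ x.1 + (∑ i, X₀ (x.2 i)) = ∑ i, X₀ ((Fin.cons x.1 x.2 : Fin (k+1) → Ω₀) i)
    rw [Fin.sum_univ_succ]
    simp

def consE2 (k : ℕ) : (((Fin k → Ω₀) × Ω₀) × Ω₀) ≃ ((Fin (k+1) → Ω₀) × Ω₀) where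
  toFun := fun x => (Fin.cons x.1.2 x.1.1, x.2)
  invFun := fun y => ((fun i => y.1 i.succ, y.1 0), y.2)
  left_inv := fun x => by obtain ⟨⟨u, a⟩, b⟩ := x; simp
  right_inv := fun y => by
    obtain ⟨f, b⟩ := y
    simp only [Prod.mk.injEq]
    exact ⟨Fin.cons_self_tail f, trivial⟩

lemma Hsum_step (k : ℕ) :
    Hsum μ₀ X₀ (k+2) ≤ Hsum μ₀ X₀ (k+1) + (Hdbl μ₀ X₀ - entropy μ₀ X₀) := by
  have hkv : entropy (prodP (prodP (piP μ₀ (Fin k)) μ₀) μ₀)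
        (fun ω => (∑ i, X₀ (ω.1.1 i)) + X₀ ω.1.2 + X₀ ω.2) + entropy μ₀ X₀
      ≤ entropy (prodP (piP μ₀ (Fin k)) μ₀) (fun ω => (∑ i, X₀ (ω.1 i)) + X₀ ω.2)
        + entropy (prodP μ₀ μ₀) (fun ω => X₀ ω.1 + X₀ ω.2) :=
    kv3 (piP μ₀ (Fin k)) μ₀ μ₀ (fun u => ∑ i, X₀ (u i)) X₀ X₀
  have t1 : entropy (prodP (prodP (piP μ₀ (Fin k)) μ₀) μ₀)
        (fun ω => (∑ i, X₀ (ω.1.1 i)) + X₀ ω.1.2 + X₀ ω.2)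
      = entropy (prodP (piP μ₀ (Fin (k+1))) μ₀) (fun ω => (∑ i, X₀ (ω.1 i)) + X₀ ω.2) :=
    entropy_reindex (prodP (piP μ₀ (Fin (k+1))) μ₀) (prodP (prodP (piP μ₀ (Fin k)) μ₀) μ₀)
      (consE2 k)
      (fun x => by
        show ((∏ i, μ₀.p (x.1.1 i)) * μ₀.p x.1.2) * μ₀.p x.2
          = (∏ i, μ₀.p ((Fin.cons x.1.2 x.1.1 : Fin (k+1) → Ω₀) i)) * μ₀.p x.2
        rw [Fin.prod_univ_succ]
        simp [mul_comm])
      (fun ω => (∑ i, X₀ (ω.1 i)) + X₀ ω.2)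
      (fun ω => (∑ i, X₀ (ω.1.1 i)) + X₀ ω.1.2 + X₀ ω.2)
      (fun x => by
        show (∑ i, X₀ (x.1.1 i)) + X₀ x.1.2 + X₀ x.2
          = (∑ i, X₀ ((Fin.cons x.1.2 x.1.1 : Fin (k+1) → Ω₀) i)) + X₀ x.2
        rw [Fin.sum_univ_succ]
        simp [add_comm])
  rw [t1, entropy_sum_cons μ₀ X₀ (k+1), entropy_sum_cons μ₀ X₀ k] at hkv
  unfold Hdbl
  linarith

lemma Hsum_le (k : ℕ) :
    Hsum μ₀ X₀ (k+1) ≤ entropy μ₀ X₀ + k * (Hdbl μ₀ X₀ - entropy μ₀ X₀) := by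
  induction k with
  | zero => simp [Hsum_one]
  | succ k ih =>
    have := Hsum_step μ₀ X₀ k
    push_cast
    push_cast at ih
    linarith

lemma Hdbl_ge : entropy μ₀ X₀ ≤ Hdbl μ₀ X₀ :=
  entropy_add_ge_right μ₀ μ₀ X₀ X₀

lemma main_bound (n m : ℕ) :
    entropy (prodP (piP μ₀ (Fin n)) (piP μ₀ (Fin m)))
        (fun ω => (∑ i, X₀ (ω.1 i)) - ∑ j, X₀ (ω.2 j))
      ≤ entropy μ₀ X₀ + ((n : ℝ) + (m : ℝ)) * (Hdbl μ₀ X₀ - entropy μ₀ X₀) := by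
  have hD : 0 ≤ Hdbl μ₀ X₀ - entropy μ₀ X₀ := by
    have := Hdbl_ge μ₀ X₀
    linarith
  match n, m with
  | 0, 0 =>
    have h : (fun ω : (Fin 0 → Ω₀) × (Fin 0 → Ω₀) =>
        (∑ i, X₀ (ω.1 i)) - ∑ j, X₀ (ω.2 j)) = fun _ => (0 : G) := by
      funext ω; simp
    rw [h, entropy_const]
    have := entropy_nonneg μ₀ X₀
    push_cast
    linarith
  | 0, (b+1) =>
    have h1 : entropy (prodP (piP μ₀ (Fin 0)) (piP μ₀ (Fin (b+1))))
        (fun ω => (∑ i, X₀ (ω.1 i)) - ∑ j, X₀ (ω.2 j))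
        = entropy (piP μ₀ (Fin (b+1))) (fun v => (0:G) - ∑ j, X₀ (v j)) :=
      entropy_snd (piP μ₀ (Fin 0)) (piP μ₀ (Fin (b+1)))
        (fun v => (0:G) - ∑ j, X₀ (v j)) _ (fun ω => by simp)
    have h2 : entropy (piP μ₀ (Fin (b+1))) (fun v => (0:G) - ∑ j, X₀ (v j))
        = Hsum μ₀ X₀ (b+1) := by
      refine entropy_comp_inj' (piP μ₀ (Fin (b+1))) (fun v => ∑ j, X₀ (v j))
        (fun x => (0:G) - x) _ (fun v => rfl) ?_
      intro x y hxy
      simpa using hxy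
    have h3 := Hsum_le μ₀ X₀ b
    rw [h1, h2]
    push_cast
    push_cast at h3
    nlinarith [hD]
  | (a+1), 0 =>
    have h1 : entropy (prodP (piP μ₀ (Fin (a+1))) (piP μ₀ (Fin 0)))
        (fun ω => (∑ i, X₀ (ω.1 i)) - ∑ j, X₀ (ω.2 j))
        = entropy (piP μ₀ (Fin (a+1))) (fun u => (∑ i, X₀ (u i)) - (0:G)) :=
      entropy_fst (piP μ₀ (Fin (a+1))) (piP μ₀ (Fin 0))
        (fun u => (∑ i, X₀ (u i)) - (0:G)) _ (fun ω => by simp)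
    have h2 : entropy (piP μ₀ (Fin (a+1))) (fun u => (∑ i, X₀ (u i)) - (0:G))
        = Hsum μ₀ X₀ (a+1) := by
      refine entropy_comp_inj' (piP μ₀ (Fin (a+1))) (fun u => ∑ i, X₀ (u i))
        (fun x => x - (0:G)) _ (fun v => rfl) ?_
      intro x y hxy
      simpa using hxy
    have h3 := Hsum_le μ₀ X₀ a
    rw [h1, h2]
    push_cast
    push_cast at h3
    nlinarith [hD]
  | (a+1), (b+1) =>
    have hrz : entropy (prodP (piP μ₀ (Fin (a+1))) (piP μ₀ (Fin (b+1))))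
          (fun ω => (∑ i, X₀ (ω.1 i)) - ∑ j, X₀ (ω.2 j)) + entropy μ₀ X₀
        ≤ entropy (prodP (piP μ₀ (Fin (a+1))) μ₀) (fun ω => (∑ i, X₀ (ω.1 i)) + X₀ ω.2)
          + entropy (prodP μ₀ (piP μ₀ (Fin (b+1)))) (fun ω => X₀ ω.1 + ∑ j, X₀ (ω.2 j)) :=
      ruzsa3 (piP μ₀ (Fin (a+1))) μ₀ (piP μ₀ (Fin (b+1)))
        (fun u => ∑ i, X₀ (u i)) X₀ (fun v => ∑ j, X₀ (v j))
    rw [entropy_sum_cons μ₀ X₀ (a+1), entropy_sum_cons' μ₀ X₀ (b+1)] at hrz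
    have ha := Hsum_le μ₀ X₀ (a+1)
    have hb := Hsum_le μ₀ X₀ (b+1)
    push_cast at ha hb ⊢
    linarith

end PiSpace

section Assemble
variable {Ω₀ : Type*} [Fintype Ω₀]

lemma prob_piP_fam {ι : Type*} [DecidableEq ι] [Fintype ι] (μ₀ : FinProb Ω₀)
    {S : Type*} (X₀ : Ω₀ → S) (f : ι → S) :
    prob (piP μ₀ ι) (fun ω i => X₀ (ω i)) f = ∏ i, prob μ₀ X₀ (f i) := by
  unfold prob
  refine Eq.trans (Finset.sum_congr rfl fun ω _ => ?_)
    (Fintype.prod_sum (f := fun (i : ι) (a : Ω₀) => if X₀ a = f i then μ₀.p a else 0)).symm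
  split
  · next h =>
    rw [piP_p]
    exact Finset.prod_congr rfl fun i _ => (if_pos (congrFun h i)).symm
  · next h =>
    obtain ⟨i, hi⟩ : ∃ i, X₀ (ω i) ≠ f i := by
      by_contra hc
      push_neg at hc
      exact h (funext hc)
    exact (Finset.prod_eq_zero (Finset.mem_univ i) (by rw [if_neg hi])).symm

lemma fam_ident {Ω ι : Type*} [Fintype Ω] [DecidableEq ι] [Fintype ι] (μ : FinProb Ω)
    {S : Type*} (Y : ι → Ω → S) (μ₀ : FinProb Ω₀) (X₀ : Ω₀ → S)
    (hfam : IndepFam μ Y) (hid : ∀ i, IdentDist μ (Y i) μ₀ X₀) :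
    IdentDist μ (fun ω (i : ι) => Y i ω) (piP μ₀ ι) (fun ω i => X₀ (ω i)) := by
  intro f
  rw [hfam f, prob_piP_fam μ₀ X₀ f]
  exact Finset.prod_congr rfl fun i _ => hid i (f i)

def sumE (n m : ℕ) : ((Fin n → Ω₀) × (Fin m → Ω₀)) ≃ (Fin n ⊕ Fin m → Ω₀) where
  toFun := fun x => Sum.elim x.1 x.2
  invFun := fun f => (fun i => f (Sum.inl i), fun j => f (Sum.inr j))
  left_inv := fun x => by obtain ⟨u, v⟩ := x; simp
  right_inv := fun f => by funext i; cases i <;> rfl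

end Assemble


/-- weak Plünnecke–Ruzsa inequality for entropy: there is an absolute
constant `C` such that if `X_1, …, X_n, X'_1, …, X'_m` are jointly independent copies of a
random variable `X₀` (whose doubling constant `σ[X₀]` is computed from two further
independent copies `W₁, W₂`), then
`H(X_1 + … + X_n − X'_1 − … − X'_m) ≤ H(X₀) + C·(n+m)·log σ[X₀]`. -/
theorem weak_pluennecke_ruzsa_entropy :
    ∃ C : ℝ, ∀ (G : Type) [AddCommGroup G] (Ω₀ Ω Ω' : Type)
      [Fintype Ω₀] [Fintype Ω] [Fintype Ω']
      (μ₀ : FinProb Ω₀) (X₀ : Ω₀ → G) (n m : ℕ) (μ : FinProb Ω)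
      (Xc : Fin n → Ω → G) (X'c : Fin m → Ω → G)
      (μ' : FinProb Ω') (W₁ W₂ : Ω' → G),
      IndepFam μ (Sum.elim Xc X'c) →
      (∀ i, IdentDist μ (Xc i) μ₀ X₀) →
      (∀ j, IdentDist μ (X'c j) μ₀ X₀) →
      IndepRV μ' W₁ W₂ →
      IdentDist μ' W₁ μ₀ X₀ →
      IdentDist μ' W₂ μ₀ X₀ →
      entropy μ (fun ω => (∑ i, Xc i ω) - ∑ j, X'c j ω) ≤
        entropy μ₀ X₀ +
          C * ((n : ℝ) + (m : ℝ)) *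
            (entropy μ' (fun ω => W₁ ω + W₂ ω) - entropy μ₀ X₀) := by
  refine ⟨1, ?_⟩
  intro G _ Ω₀ Ω Ω' _ _ _ μ₀ X₀ n m μ Xc X'c μ' W₁ W₂ hfam hid hid' hW hW1 hW2
  have ha : entropy μ' (fun ω => W₁ ω + W₂ ω) = Hdbl μ₀ X₀ := by
    have hpair : IdentDist μ' (fun ω => (W₁ ω, W₂ ω)) (prodP μ₀ μ₀)
        (fun ω => (X₀ ω.1, X₀ ω.2)) := by
      intro st
      obtain ⟨s, t⟩ := st
      have hpp := prob_pair_prod μ₀ μ₀ X₀ X₀ (fun ω => (X₀ ω.1, X₀ ω.2)) (fun ω => rfl) s t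
      rw [hW s t, hW1 s, hW2 t, ← hpp]
    exact entropy_congr μ' (identDist_comp' μ' hpair (fun p : G × G => p.1 + p.2)
      (fun ω => W₁ ω + W₂ ω) (fun ω => X₀ ω.1 + X₀ ω.2) (fun ω => rfl) (fun ω => rfl))
  have hidall : ∀ i : Fin n ⊕ Fin m, IdentDist μ (Sum.elim Xc X'c i) μ₀ X₀ := by
    intro i
    cases i with
    | inl i => exact hid i
    | inr j => exact hid' j
  have hfi : IdentDist μ (fun ω (i : Fin n ⊕ Fin m) => Sum.elim Xc X'c i ω)
      (piP μ₀ (Fin n ⊕ Fin m)) (fun ω i => X₀ (ω i)) :=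
    fam_ident μ (Sum.elim Xc X'c) μ₀ X₀ hfam hidall
  have hcomp : IdentDist μ (fun ω => (∑ i, Xc i ω) - ∑ j, X'c j ω)
      (piP μ₀ (Fin n ⊕ Fin m))
      (fun ω => (∑ i, X₀ (ω (Sum.inl i))) - ∑ j, X₀ (ω (Sum.inr j))) :=
    identDist_comp' μ hfi (fun f : Fin n ⊕ Fin m → G => (∑ i, f (Sum.inl i)) - ∑ j, f (Sum.inr j))
      (fun ω => (∑ i, Xc i ω) - ∑ j, X'c j ω)
      (fun ω => (∑ i, X₀ (ω (Sum.inl i))) - ∑ j, X₀ (ω (Sum.inr j)))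
      (fun ω => rfl) (fun ω => rfl)
  have hent1 : entropy μ (fun ω => (∑ i, Xc i ω) - ∑ j, X'c j ω)
      = entropy (piP μ₀ (Fin n ⊕ Fin m))
        (fun ω => (∑ i, X₀ (ω (Sum.inl i))) - ∑ j, X₀ (ω (Sum.inr j))) :=
    entropy_congr μ hcomp
  have hent2 : entropy (piP μ₀ (Fin n ⊕ Fin m))
        (fun ω => (∑ i, X₀ (ω (Sum.inl i))) - ∑ j, X₀ (ω (Sum.inr j)))
      = entropy (prodP (piP μ₀ (Fin n)) (piP μ₀ (Fin m)))
        (fun ω => (∑ i, X₀ (ω.1 i)) - ∑ j, X₀ (ω.2 j)) :=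
    (entropy_reindex (piP μ₀ (Fin n ⊕ Fin m)) (prodP (piP μ₀ (Fin n)) (piP μ₀ (Fin m)))
      (sumE n m)
      (fun x => by
        show (∏ i, μ₀.p (x.1 i)) * (∏ j, μ₀.p (x.2 j))
          = ∏ i, μ₀.p (Sum.elim x.1 x.2 i)
        rw [Fintype.prod_sum_type]
        rfl)
      (fun ω => (∑ i, X₀ (ω (Sum.inl i))) - ∑ j, X₀ (ω (Sum.inr j)))
      (fun x => (∑ i, X₀ (x.1 i)) - ∑ j, X₀ (x.2 j))
      (fun x => rfl)).symm
  rw [hent1, hent2, ha, one_mul]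
  exact main_bound μ₀ X₀ n m
end

section
/- Concavity consequence for F(x) = x log(1/x): for all 0 ≤ a, x ≤ 1/e one has F(ax) ≤ 2·F(a)·F(x). -/
open Real
open scoped BigOperators Pointwise Classical

/-- for `F(x) = x·log(1/x)` and `0 ≤ a, x ≤ 1/e`, `F(ax) ≤ 2·F(a)·F(x)`. -/
theorem negMulLog_mul_le {a x : ℝ} (ha0 : 0 ≤ a) (ha : a ≤ (Real.exp 1)⁻¹)
    (hx0 : 0 ≤ x) (hx : x ≤ (Real.exp 1)⁻¹) :
    Real.negMulLog (a * x) ≤ 2 * Real.negMulLog a * Real.negMulLog x := by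
  rcases eq_or_lt_of_le ha0 with rfl | ha0'
  · simp [Real.negMulLog]
  rcases eq_or_lt_of_le hx0 with rfl | hx0'
  · simp [Real.negMulLog]
  have hla : Real.log a ≤ -1 := by
    calc Real.log a ≤ Real.log (Real.exp 1)⁻¹ := Real.log_le_log ha0' ha
    _ = -1 := by simp [Real.log_inv]
  have hlx : Real.log x ≤ -1 := by
    calc Real.log x ≤ Real.log (Real.exp 1)⁻¹ := Real.log_le_log hx0' hx
    _ = -1 := by simp [Real.log_inv]
  have hFa : a ≤ Real.negMulLog a := by
    unfold Real.negMulLog; nlinarith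
  have hFx : x ≤ Real.negMulLog x := by
    unfold Real.negMulLog; nlinarith
  have hFa0 : 0 ≤ Real.negMulLog a := le_trans ha0 hFa
  have hFx0 : 0 ≤ Real.negMulLog x := le_trans hx0 hFx
  have key : Real.negMulLog (a * x) = x * Real.negMulLog a + a * Real.negMulLog x := by
    unfold Real.negMulLog
    rw [Real.log_mul (ne_of_gt ha0') (ne_of_gt hx0')]; ring
  nlinarith [mul_le_mul_of_nonneg_right hFx hFa0, mul_le_mul_of_nonneg_right hFa hFx0]
end
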